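/- Let S be a LexOpt schedule of jobs with processing times p_1,…,p_n > 0 on m identical machines. For every subset M' of the machines with |M'| = m', letting J' be the set of jobs that S assigns to machines in M', the restriction of S to M' is a minimum-makespan schedule of J' on m' machines; that is, max_{i ∈ M'} C_i(S) = C*_max(m', J'). -/

import Mathlib

open Finset

/-- Completion time (load) of machine `i` under schedule `σ` and processing times `p`. -/
noncomputable def mLoad {n m : ℕ} (p : Fin n → ℝ) (σ : Fin n → Fin m) (i : Fin m) : ℝ :=
  ∑ j ∈ Finset.univ.filter (fun j => σ j = i), p j

/-- Makespan of schedule `σ`: the maximum machine completion time. -/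
noncomputable def makespan {n m : ℕ} (p : Fin n → ℝ) (σ : Fin n → Fin m) : ℝ :=
  ⨆ i, mLoad p σ i

/-- Minimum makespan of the jobs with processing times `p` on `m` machines. -/
noncomputable def optMakespan {n : ℕ} (m : ℕ) (p : Fin n → ℝ) : ℝ :=
  ⨅ σ : Fin n → Fin m, makespan p σ

/-- The completion-time vector sorted in non-increasing order. -/
noncomputable def sortedDesc {m : ℕ} (C : Fin m → ℝ) : Fin m → ℝ :=
  fun i => C (Tuple.sort C i.rev)

/-- A schedule is LexOpt if its non-increasingly sorted completion-time vector is
lexicographically at most that of every other schedule. -/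
def IsLexOpt {n m : ℕ} (p : Fin n → ℝ) (σ : Fin n → Fin m) : Prop :=
  ∀ σ' : Fin n → Fin m, toLex (sortedDesc (mLoad p σ)) ≤ toLex (sortedDesc (mLoad p σ'))

/-- Minimum makespan of the job subset `J` on `m'` machines. -/
noncomputable def optMakespanOn {n : ℕ} (m' : ℕ) (p : Fin n → ℝ) (J : Finset (Fin n)) : ℝ :=
  ⨅ τ : Fin n → Fin m', ⨆ i : Fin m', ∑ j ∈ J.filter (fun j => τ j = i), p j

section Aux

variable {m : ℕ}

lemma antitone_mem_char {w : Fin m → ℝ} (hw : Antitone w) (t : ℝ) (i : Fin m) :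
    t ≤ w i ↔ i.val < (univ.filter fun j => t ≤ w j).card := by
  constructor
  · intro h
    have hsub : Finset.Iic i ⊆ univ.filter fun j => t ≤ w j := by
      intro j hj
      simp only [Finset.mem_Iic] at hj
      simp only [mem_filter, mem_univ, true_and]
      exact le_trans h (hw hj)
    have := Finset.card_le_card hsub
    rw [Fin.card_Iic] at this
    omega
  · intro h
    by_contra hc
    have hsub : (univ.filter fun j => t ≤ w j) ⊆ Finset.Iio i := by
      intro j hj
      simp only [mem_filter, mem_univ, true_and] at hj
      simp only [Finset.mem_Iio]
      by_contra hji
      exact hc (le_trans hj (hw (not_lt.1 hji)))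
    have := Finset.card_le_card hsub
    rw [Fin.card_Iio] at this
    omega

lemma lex_lt_of_counts {u v : Fin m → ℝ} (hu : Antitone u) (hv : Antitone v) {L : ℝ}
    (h1 : ∀ t, L < t →
      (univ.filter fun i => t ≤ u i).card = (univ.filter fun i => t ≤ v i).card)
    (h2 : (univ.filter fun i => L ≤ u i).card < (univ.filter fun i => L ≤ v i).card) :
    toLex u < toLex v := by
  set k := (univ.filter fun i => L ≤ u i).card with hk
  have hkm : k < m := by
    have := Finset.card_filter_le (univ : Finset (Fin m)) (fun i => L ≤ v i)
    simp only [Finset.card_univ, Fintype.card_fin] at this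
    omega
  refine ⟨⟨k, hkm⟩, ?_, ?_⟩
  · intro j hj
    show u j = v j
    have hjk : j.val < k := hj
    have hju : L ≤ u j := (antitone_mem_char hu L j).2 hjk
    have hjv : L ≤ v j := (antitone_mem_char hv L j).2 (by omega)
    rcases lt_or_eq_of_le hju with hgt | heq
    · have huv : u j ≤ v j := by
        refine (antitone_mem_char hv (u j) j).2 ?_
        rw [← h1 (u j) hgt]
        exact (antitone_mem_char hu (u j) j).1 le_rfl
      have hgtv : L < v j := lt_of_lt_of_le hgt huv
      have hvu : v j ≤ u j := by
        refine (antitone_mem_char hu (v j) j).2 ?_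
        rw [h1 (v j) hgtv]
        exact (antitone_mem_char hv (v j) j).1 le_rfl
      exact le_antisymm huv hvu
    · rcases lt_or_eq_of_le hjv with hgtv | heqv
      · have hvu : v j ≤ u j := by
          refine (antitone_mem_char hu (v j) j).2 ?_
          rw [h1 (v j) hgtv]
          exact (antitone_mem_char hv (v j) j).1 le_rfl
        exact absurd (lt_of_lt_of_le hgtv hvu) (by rw [← heq]; exact lt_irrefl L)
      · rw [← heq, ← heqv]
  · have h1u : ¬ (L ≤ u ⟨k, hkm⟩) := by
      intro h
      have := (antitone_mem_char hu L ⟨k, hkm⟩).1 h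
      simp only [← hk] at this
      omega
    have h2v : L ≤ v ⟨k, hkm⟩ := (antitone_mem_char hv L ⟨k, hkm⟩).2 h2
    exact lt_of_lt_of_le (not_le.1 h1u) h2v

lemma sortedDesc_antitone (C : Fin m → ℝ) : Antitone (sortedDesc C) := by
  intro a b hab
  exact Tuple.monotone_sort C (Fin.rev_le_rev.2 hab)

lemma count_sortedDesc (C : Fin m → ℝ) (t : ℝ) :
    (univ.filter fun i => t ≤ sortedDesc C i).card = (univ.filter fun i => t ≤ C i).card := by
  apply Finset.card_bij (fun a _ => Tuple.sort C a.rev)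
  · intro a ha
    simp only [mem_filter, mem_univ, true_and] at ha ⊢
    simp only [sortedDesc] at ha ⊢
    exact ha
  · intro a _ b _ h
    exact Fin.rev_injective ((Tuple.sort C).injective h)
  · intro b hb
    refine ⟨((Tuple.sort C).symm b).rev, ?_, ?_⟩
    · simp only [mem_filter, mem_univ, true_and] at hb ⊢
      simp only [sortedDesc] at hb ⊢
      rwa [Fin.rev_rev, Equiv.apply_symm_apply]
    · rw [Fin.rev_rev, Equiv.apply_symm_apply]

end Aux

/-- The restriction of a LexOpt schedule to any nonempty subset `M'` of machines
is a minimum-makespan schedule of the jobs assigned to `M'` on `|M'|` machines. -/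
theorem stmt1 (n m : ℕ) (p : Fin n → ℝ) (hp : ∀ j, 0 < p j)
    (σ : Fin n → Fin m) (hσ : IsLexOpt p σ)
    (M' : Finset (Fin m)) (hM' : M'.Nonempty) :
    M'.sup' hM' (mLoad p σ) =
      optMakespanOn M'.card p (Finset.univ.filter (fun j => σ j ∈ M')) := by
  classical
  have hm' : 0 < M'.card := Finset.card_pos.2 hM'
  haveI hne1 : Nonempty (Fin M'.card) := ⟨⟨0, hm'⟩⟩
  haveI hne2 : Nonempty (Fin n → Fin M'.card) := ⟨fun _ => ⟨0, hm'⟩⟩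
  set J : Finset (Fin n) := univ.filter (fun j => σ j ∈ M') with hJ
  set L := M'.sup' hM' (mLoad p σ) with hL
  let e : Fin M'.card ≃o {x // x ∈ M'} := M'.orderIsoOfFin rfl
  have hFnonneg : ∀ τ : Fin n → Fin M'.card, ∀ i,
      (0:ℝ) ≤ ∑ j ∈ J.filter (fun j => τ j = i), p j :=
    fun τ i => Finset.sum_nonneg fun j _ => (hp j).le
  have hbddF : ∀ τ : Fin n → Fin M'.card,
      BddAbove (Set.range fun i => ∑ j ∈ J.filter (fun j => τ j = i), p j) :=
    fun τ => (Set.finite_range _).bddAbove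
  have h0 : ∀ τ : Fin n → Fin M'.card,
      (0:ℝ) ≤ ⨆ i : Fin M'.card, ∑ j ∈ J.filter (fun j => τ j = i), p j :=
    fun τ => le_trans (hFnonneg τ ⟨0, hm'⟩) (le_ciSup (hbddF τ) ⟨0, hm'⟩)
  rw [optMakespanOn]
  apply le_antisymm
  · -- L ≤ opt
    apply le_ciInf
    intro τ
    by_contra hlt
    push_neg at hlt
    have hτk : ∀ k : Fin M'.card, (∑ j ∈ J.filter (fun j => τ j = k), p j) < L :=
      fun k => lt_of_le_of_lt (le_ciSup (hbddF τ) k) hlt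
    set σ' : Fin n → Fin m :=
      fun j => if h : σ j ∈ M' then (e (τ j) : Fin m) else σ j with hσ'
    have hout : ∀ i : Fin m, i ∉ M' → mLoad p σ' i = mLoad p σ i := by
      intro i hi
      unfold mLoad
      congr 1
      ext j
      simp only [mem_filter, mem_univ, true_and, hσ']
      by_cases h : σ j ∈ M'
      · rw [dif_pos h]
        constructor
        · intro he; exact absurd (he ▸ (e (τ j)).2) hi
        · intro he; exact absurd (he ▸ h) hi
      · rw [dif_neg h]
    have hin : ∀ i : Fin m, ∀ hi : i ∈ M', mLoad p σ' i < L := by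
      intro i hi
      have heq : mLoad p σ' i = ∑ j ∈ J.filter (fun j => τ j = e.symm ⟨i, hi⟩), p j := by
        unfold mLoad
        congr 1
        ext j
        simp only [mem_filter, mem_univ, true_and, hJ, hσ']
        by_cases h : σ j ∈ M'
        · rw [dif_pos h]
          constructor
          · intro he
            refine ⟨h, ?_⟩
            have he' : e (τ j) = ⟨i, hi⟩ := Subtype.ext he
            rw [← he', OrderIso.symm_apply_apply]
          · rintro ⟨-, hk⟩
            rw [hk, OrderIso.apply_symm_apply]
        · rw [dif_neg h]
          constructor
          · intro he; exact absurd (he ▸ hi) h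
          · rintro ⟨hjm, -⟩; exact absurd hjm h
      rw [heq]
      exact hτk _
    have hcontra : toLex (sortedDesc (mLoad p σ')) < toLex (sortedDesc (mLoad p σ)) := by
      apply lex_lt_of_counts (sortedDesc_antitone _) (sortedDesc_antitone _) (L := L)
      · intro t ht
        rw [count_sortedDesc, count_sortedDesc]
        congr 1
        ext i
        simp only [mem_filter, mem_univ, true_and]
        by_cases hi : i ∈ M'
        · constructor
          · intro h
            exact absurd (lt_of_le_of_lt h (hin i hi)) (not_lt.2 ht.le)
          · intro h
            have : mLoad p σ i ≤ L := Finset.le_sup' (mLoad p σ) hi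
            exact absurd (lt_of_le_of_lt h (lt_of_le_of_lt this ht)) (lt_irrefl t)
        · rw [hout i hi]
      · rw [count_sortedDesc, count_sortedDesc]
        apply Finset.card_lt_card
        rw [Finset.ssubset_def]
        constructor
        · intro i hi
          simp only [mem_filter, mem_univ, true_and] at hi ⊢
          by_cases him : i ∈ M'
          · exact absurd hi (not_le.2 (hin i him))
          · rw [← hout i him]; exact hi
        · intro hsub
          obtain ⟨i0, hi0M, hi0⟩ := Finset.exists_mem_eq_sup' hM' (mLoad p σ)
          have hmem : i0 ∈ univ.filter fun i => L ≤ mLoad p σ i := by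
            simp only [mem_filter, mem_univ, true_and]
            rw [hL, hi0]
          have h2 := hsub hmem
          simp only [mem_filter, mem_univ, true_and] at h2
          exact absurd h2 (not_le.2 (hin i0 hi0M))
    exact lt_irrefl _ (lt_of_lt_of_le hcontra (hσ σ'))
  · -- opt ≤ L
    set τ0 : Fin n → Fin M'.card :=
      fun j => if h : σ j ∈ M' then e.symm ⟨σ j, h⟩ else ⟨0, hm'⟩ with hτ0
    have hfilter : ∀ k : Fin M'.card,
        J.filter (fun j => τ0 j = k) = univ.filter (fun j => σ j = (e k : Fin m)) := by
      intro k
      ext j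
      simp only [hJ, mem_filter, mem_univ, true_and, hτ0]
      constructor
      · rintro ⟨hj, hk⟩
        rw [dif_pos hj] at hk
        have : (⟨σ j, hj⟩ : {x // x ∈ M'}) = e k := by
          rw [← hk, OrderIso.apply_symm_apply]
        exact congrArg Subtype.val this
      · intro hk
        have hj : σ j ∈ M' := hk ▸ (e k).2
        refine ⟨hj, ?_⟩
        rw [dif_pos hj]
        have : (⟨σ j, hj⟩ : {x // x ∈ M'}) = e k := Subtype.ext hk
        rw [this, OrderIso.symm_apply_apply]
    have hFτ0 : (⨆ i : Fin M'.card, ∑ j ∈ J.filter (fun j => τ0 j = i), p j) = L := by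
      have h1 : ∀ k : Fin M'.card,
          (∑ j ∈ J.filter (fun j => τ0 j = k), p j) = mLoad p σ (e k) := by
        intro k; rw [hfilter k]; rfl
      calc (⨆ i : Fin M'.card, ∑ j ∈ J.filter (fun j => τ0 j = i), p j)
          = ⨆ k : Fin M'.card, mLoad p σ (e k) := by
            exact iSup_congr h1
        _ = (univ : Finset (Fin M'.card)).sup'
              (Finset.univ_nonempty (α := Fin M'.card)) (fun k => mLoad p σ (e k)) := by
            haveI : Nonempty (Fin M'.card) := ⟨⟨0, hm'⟩⟩
            exact (Finset.sup'_univ_eq_ciSup _).symm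
        _ = L := by
            apply le_antisymm
            · apply Finset.sup'_le
              intro k _
              exact Finset.le_sup' (mLoad p σ) (e k).2
            · apply Finset.sup'_le
              intro i hi
              have : mLoad p σ i = mLoad p σ (e (e.symm ⟨i, hi⟩)) := by
                rw [OrderIso.apply_symm_apply]
              rw [this]
              haveI : Nonempty (Fin M'.card) := ⟨⟨0, hm'⟩⟩
              exact Finset.le_sup' (fun k => mLoad p σ (e k)) (Finset.mem_univ _)
    have hbdd : BddBelow (Set.range fun τ : Fin n → Fin M'.card =>
        ⨆ i : Fin M'.card, ∑ j ∈ J.filter (fun j => τ j = i), p j) := by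
      refine ⟨0, ?_⟩
      rintro x ⟨τ, rfl⟩
      exact h0 τ
    calc (⨅ τ : Fin n → Fin M'.card, ⨆ i : Fin M'.card, ∑ j ∈ J.filter (fun j => τ j = i), p j)
        ≤ ⨆ i : Fin M'.card, ∑ j ∈ J.filter (fun j => τ0 j = i), p j := ciInf_le hbdd τ0
      _ = L := hFτ0
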